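/- Let W be a hyperplane in \mathbb{R}^n with equation E (a nonzero linear functional vanishing on W), let q be a polynomial function on a subspace \mathfrak{s} \subseteq W constant in the direction of a vector \phi \in \mathfrak{s}, and let X = [v_1, \ldots, v_N] be vectors spanning a pointed cone with none lying in \mathfrak{s}. Denoting by \bar{v} the projection to V/\langle\phi\rangle, the convolution satisfies (q * T(X))(v) = (q * T(X/\langle\phi\rangle))(\bar{v}) for all v, i.e., \int_0^\infty\cdots\int_0^\infty q(v - \sum t_i v_i)\,dt = \int_0^\infty\cdots\int_0^\infty q(\bar{v} - \sum t_i \bar{v_i})\,dt. -/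
import Mathlib


open MeasureTheory

/-- Let `q` be a polynomial function on `ℝ^n` constant in the direction of
a vector `φ`, and let `X = [w₁,…,w_N]` span a pointed cone. Then the convolution
`q * T(X)` only depends on the projections of the `wᵢ` modulo `φ`: for any shifts
`cᵢ`, `∫_{[0,∞)^N} q(v - ∑ tᵢ wᵢ) dt = ∫_{[0,∞)^N} q(v - ∑ tᵢ (wᵢ + cᵢ φ)) dt`
(both integrals being assumed convergent). -/
theorem convolution_polynomial_spline_descends
    (n N : ℕ) (q : (Fin n → ℝ) → ℝ)
    (hqpoly : ∃ p : MvPolynomial (Fin n) ℝ, ∀ x, q x = MvPolynomial.eval x p)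
    (φ : Fin n → ℝ)
    (hqconst : ∀ (x : Fin n → ℝ) (a : ℝ), q (x + a • φ) = q x)
    (w : Fin N → Fin n → ℝ)
    (hpointed : ∃ u : Module.Dual ℝ (Fin n → ℝ), ∀ i, 0 < u (w i))
    (c : Fin N → ℝ) (v : Fin n → ℝ)
    (hint₁ : IntegrableOn (fun t : Fin N → ℝ => q (v - ∑ i, t i • w i))
      {t : Fin N → ℝ | ∀ i, 0 ≤ t i})
    (hint₂ : IntegrableOn (fun t : Fin N → ℝ => q (v - ∑ i, t i • (w i + c i • φ)))
      {t : Fin N → ℝ | ∀ i, 0 ≤ t i}) :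
    ∫ t in {t : Fin N → ℝ | ∀ i, 0 ≤ t i}, q (v - ∑ i, t i • w i)
      = ∫ t in {t : Fin N → ℝ | ∀ i, 0 ≤ t i}, q (v - ∑ i, t i • (w i + c i • φ)) := by
  congr 1
  funext t
  have : v - ∑ i, t i • (w i + c i • φ)
      = (v - ∑ i, t i • w i) + (-∑ i, t i * c i) • φ := by
    simp only [smul_add, Finset.sum_add_distrib, smul_smul, ← Finset.sum_smul]
    rw [neg_smul]
    abel
  rw [this, hqconst]
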